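/- For every k > 0 there exist constants C = C(k) > 0 and δ = δ(k) > 0 such that for every pair X, Y ∈ ℝ^{n×2} with max{‖B(X)‖, ‖B(Y)‖} ≤ k one has −⟨(A(X) − A(Y))J, X − Y⟩ + C·‖B(X) − B(Y)‖·min{‖X‖, ‖Y‖}·‖X − Y‖ ≥ δ·‖X − Y‖². (Note −⟨(A(X)−A(Y))J, X−Y⟩ = ⟨D𝒜(X)−D𝒜(Y), X−Y⟩ since J² = −Id₂.) -/

import Mathlib

open Matrix BigOperators

noncomputable section

/-- Frobenius inner product of matrices. -/
def frobInner {m k : ℕ} (X Y : Matrix (Fin m) (Fin k) ℝ) : ℝ :=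
  ∑ i, ∑ j, X i j * Y i j

/-- Frobenius norm of a matrix. -/
def frobNorm {m k : ℕ} (X : Matrix (Fin m) (Fin k) ℝ) : ℝ :=
  Real.sqrt (frobInner X X)

/-- The area integrand `𝒜(X) = √(1 + ‖X‖² + det(XᵀX))`. -/
def Area {n : ℕ} (X : Matrix (Fin n) (Fin 2) ℝ) : ℝ :=
  Real.sqrt (1 + frobInner X X + (Xᵀ * X).det)

/-- The symplectic matrix `J = [[0,1],[−1,0]]`. -/
def symJ : Matrix (Fin 2) (Fin 2) ℝ := !![0, 1; -1, 0]

/-- The gradient of a function on matrix space, given by entrywise partial derivatives. -/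
def grad {n : ℕ} (f : Matrix (Fin n) (Fin 2) ℝ → ℝ) (X : Matrix (Fin n) (Fin 2) ℝ) :
    Matrix (Fin n) (Fin 2) ℝ :=
  fun i j => deriv (fun t : ℝ => f (X + t • Matrix.single i j 1)) 0

/-- `A(X) = D𝒜(X)J`. -/
def matA {n : ℕ} (X : Matrix (Fin n) (Fin 2) ℝ) : Matrix (Fin n) (Fin 2) ℝ :=
  grad Area X * symJ

/-- `B(X) = XᵀD𝒜(X)J − 𝒜(X)J`. -/
def matB {n : ℕ} (X : Matrix (Fin n) (Fin 2) ℝ) : Matrix (Fin 2) (Fin 2) ℝ :=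
  Xᵀ * grad Area X * symJ - Area X • symJ

-- ### basic frobInner lemmas

lemma frobInner_self_nonneg {m k : ℕ} (X : Matrix (Fin m) (Fin k) ℝ) : 0 ≤ frobInner X X := by
  apply Finset.sum_nonneg; intro i _; apply Finset.sum_nonneg; intro j _; exact mul_self_nonneg _

lemma frobNorm_nonneg {m k : ℕ} (X : Matrix (Fin m) (Fin k) ℝ) : 0 ≤ frobNorm X :=
  Real.sqrt_nonneg _

lemma frobNorm_sq {m k : ℕ} (X : Matrix (Fin m) (Fin k) ℝ) : frobNorm X ^ 2 = frobInner X X :=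
  Real.sq_sqrt (frobInner_self_nonneg X)

lemma frobInner_neg_neg {m k : ℕ} (X Y : Matrix (Fin m) (Fin k) ℝ) :
    frobInner (-X) (-Y) = frobInner X Y := by
  simp [frobInner]

lemma frobNorm_neg {m k : ℕ} (X : Matrix (Fin m) (Fin k) ℝ) : frobNorm (-X) = frobNorm X := by
  simp [frobNorm, frobInner_neg_neg]

lemma frobInner_sub_left {m k : ℕ} (X Y Z : Matrix (Fin m) (Fin k) ℝ) :
    frobInner (X - Y) Z = frobInner X Z - frobInner Y Z := by
  simp [frobInner, sub_mul, Finset.sum_sub_distrib]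

lemma frobInner_add_left {m k : ℕ} (X Y Z : Matrix (Fin m) (Fin k) ℝ) :
    frobInner (X + Y) Z = frobInner X Z + frobInner Y Z := by
  simp [frobInner, add_mul, Finset.sum_add_distrib]

-- Cauchy-Schwarz
lemma frobInner_le {m k : ℕ} (X Y : Matrix (Fin m) (Fin k) ℝ) :
    frobInner X Y ≤ frobNorm X * frobNorm Y := by
  have h := Real.sum_mul_le_sqrt_mul_sqrt (Finset.univ : Finset (Fin m × Fin k))
      (fun p => X p.1 p.2) (fun p => Y p.1 p.2)
  have e1 : ∀ Z W : Matrix (Fin m) (Fin k) ℝ, frobInner Z W = ∑ p : Fin m × Fin k, Z p.1 p.2 * W p.1 p.2 := by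
    intro Z W; rw [Fintype.sum_prod_type]; rfl
  rw [e1, frobNorm, frobNorm, e1 X X, e1 Y Y]
  simpa only [pow_two] using h

lemma neg_frobNorm_mul_le {m k : ℕ} (X Y : Matrix (Fin m) (Fin k) ℝ) :
    -(frobNorm X * frobNorm Y) ≤ frobInner X Y := by
  have h := frobInner_le (-X) Y
  have : frobInner (-X) Y = -frobInner X Y := by simp [frobInner]
  rw [this, frobNorm_neg] at h
  linarith

-- submultiplicativity
lemma frobNorm_mul_le {m k l : ℕ} (X : Matrix (Fin m) (Fin k) ℝ) (Y : Matrix (Fin k) (Fin l) ℝ) :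
    frobNorm (X * Y) ≤ frobNorm X * frobNorm Y := by
  have h1 : frobInner (X * Y) (X * Y) ≤ frobInner X X * frobInner Y Y := by
    have h2 : ∀ i j, (X * Y) i j * (X * Y) i j ≤ (∑ c, X i c ^ 2) * (∑ c, Y c j ^ 2) := by
      intro i j
      have := Finset.sum_mul_sq_le_sq_mul_sq Finset.univ (fun c => X i c) (fun c => Y c j)
      simpa [Matrix.mul_apply, pow_two] using this
    calc frobInner (X * Y) (X * Y) ≤ ∑ i, ∑ j, (∑ c, X i c ^ 2) * (∑ c, Y c j ^ 2) := by
          apply Finset.sum_le_sum; intro i _; apply Finset.sum_le_sum; intro j _; exact h2 i j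
      _ = (∑ i, ∑ c, X i c ^ 2) * (∑ j, ∑ c, Y c j ^ 2) := by
          rw [Finset.sum_mul_sum]
      _ = frobInner X X * frobInner Y Y := by
          congr 1
          · simp [frobInner, pow_two]
          · rw [frobInner, Finset.sum_comm]; simp [pow_two]
  calc frobNorm (X * Y) ≤ Real.sqrt (frobInner X X * frobInner Y Y) :=
        Real.sqrt_le_sqrt h1
    _ = frobNorm X * frobNorm Y := Real.sqrt_mul (frobInner_self_nonneg X) _

-- ### areaSq
def areaSq {n : ℕ} (X : Matrix (Fin n) (Fin 2) ℝ) : ℝ := 1 + frobInner X X + (Xᵀ * X).det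

def Pmat {n : ℕ} (X : Matrix (Fin n) (Fin 2) ℝ) : Matrix (Fin 2) (Fin 2) ℝ :=
  (1 + frobInner X X) • (1 : Matrix (Fin 2) (Fin 2) ℝ) - Xᵀ * X

lemma Area_eq {n : ℕ} (X : Matrix (Fin n) (Fin 2) ℝ) : Area X = Real.sqrt (areaSq X) := rfl

lemma S_symm {n : ℕ} (X : Matrix (Fin n) (Fin 2) ℝ) (a b : Fin 2) :
    (Xᵀ * X) a b = (Xᵀ * X) b a := by
  simp [Matrix.mul_apply, Matrix.transpose_apply, mul_comm]

lemma S_diag_nonneg {n : ℕ} (X : Matrix (Fin n) (Fin 2) ℝ) (a : Fin 2) :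
    0 ≤ (Xᵀ * X) a a := by
  simp only [Matrix.mul_apply, Matrix.transpose_apply]
  exact Finset.sum_nonneg fun m _ => mul_self_nonneg _

lemma det_StX_nonneg {n : ℕ} (X : Matrix (Fin n) (Fin 2) ℝ) : 0 ≤ (Xᵀ * X).det := by
  rw [Matrix.det_fin_two]
  have hCS := Finset.sum_mul_sq_le_sq_mul_sq Finset.univ (fun m => X m 0) (fun m => X m 1)
  have h01 : (Xᵀ * X) 0 1 = ∑ m, X m 0 * X m 1 := by simp [Matrix.mul_apply]
  have h10 : (Xᵀ * X) 1 0 = ∑ m, X m 1 * X m 0 := by simp [Matrix.mul_apply]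
  have h00 : (Xᵀ * X) 0 0 = ∑ m, X m 0 ^ 2 := by simp [Matrix.mul_apply, pow_two]
  have h11 : (Xᵀ * X) 1 1 = ∑ m, X m 1 ^ 2 := by simp [Matrix.mul_apply, pow_two]
  rw [h01, h10, h00, h11]
  have : (∑ m, X m 1 * X m 0) = ∑ m, X m 0 * X m 1 := by
    apply Finset.sum_congr rfl; intro m _; ring
  rw [this]
  nlinarith [hCS]

lemma frobInner_eq_trace {n : ℕ} (X : Matrix (Fin n) (Fin 2) ℝ) :
    frobInner X X = (Xᵀ * X) 0 0 + (Xᵀ * X) 1 1 := by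
  simp [frobInner, Matrix.mul_apply, Fin.sum_univ_two, Finset.sum_add_distrib]

lemma areaSq_pos {n : ℕ} (X : Matrix (Fin n) (Fin 2) ℝ) : 0 < areaSq X := by
  have h1 := frobInner_self_nonneg X
  have h2 := det_StX_nonneg X
  unfold areaSq; linarith

lemma Area_pos {n : ℕ} (X : Matrix (Fin n) (Fin 2) ℝ) : 0 < Area X := by
  rw [Area_eq]; exact Real.sqrt_pos.mpr (areaSq_pos X)

lemma Area_sq {n : ℕ} (X : Matrix (Fin n) (Fin 2) ℝ) : Area X ^ 2 = areaSq X := by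
  rw [Area_eq]; exact Real.sq_sqrt (areaSq_pos X).le

lemma areaSq_expand {n : ℕ} (X : Matrix (Fin n) (Fin 2) ℝ) :
    areaSq X = 1 + ((Xᵀ * X) 0 0 + (Xᵀ * X) 1 1) +
      ((Xᵀ * X) 0 0 * (Xᵀ * X) 1 1 - (Xᵀ * X) 0 1 * (Xᵀ * X) 1 0) := by
  rw [areaSq, frobInner_eq_trace, Matrix.det_fin_two]

-- ### derivative computation

def Dd {n : ℕ} (X E : Matrix (Fin n) (Fin 2) ℝ) (a b : Fin 2) : ℝ :=
  ∑ m, (E m a * X m b + X m a * E m b)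

lemma S_entry_eq {n : ℕ} (X E : Matrix (Fin n) (Fin 2) ℝ) (t : ℝ) (a b : Fin 2) :
    ((X + t • E)ᵀ * (X + t • E)) a b = ∑ m, (X m a + t * E m a) * (X m b + t * E m b) := by
  simp [Matrix.mul_apply, Matrix.transpose_apply, Matrix.add_apply, Matrix.smul_apply,
    smul_eq_mul]

lemma hasDerivAt_entry {n : ℕ} (X E : Matrix (Fin n) (Fin 2) ℝ) (a b : Fin 2) :
    HasDerivAt (fun t : ℝ => ((X + t • E)ᵀ * (X + t • E)) a b) (Dd X E a b) 0 := by
  have h : HasDerivAt (fun t : ℝ => ∑ m, (X m a + t * E m a) * (X m b + t * E m b))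
      (Dd X E a b) 0 := by
    apply HasDerivAt.fun_sum
    intro m _
    have h1 : HasDerivAt (fun t : ℝ => X m a + t * E m a) (E m a) 0 := by
      simpa using ((hasDerivAt_id (0 : ℝ)).mul_const (E m a)).const_add (X m a)
    have h2 : HasDerivAt (fun t : ℝ => X m b + t * E m b) (E m b) 0 := by
      simpa using ((hasDerivAt_id (0 : ℝ)).mul_const (E m b)).const_add (X m b)
    simpa using h1.fun_mul h2
  apply h.congr_of_eventuallyEq
  filter_upwards with t
  exact S_entry_eq X E t a b

lemma entry_at_zero {n : ℕ} (X E : Matrix (Fin n) (Fin 2) ℝ) (a b : Fin 2) :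
    ((X + (0 : ℝ) • E)ᵀ * (X + (0 : ℝ) • E)) a b = (Xᵀ * X) a b := by
  norm_num

lemma hasDerivAt_areaSq {n : ℕ} (X E : Matrix (Fin n) (Fin 2) ℝ) :
    HasDerivAt (fun t : ℝ => areaSq (X + t • E))
      (Dd X E 0 0 + Dd X E 1 1 +
        (Dd X E 0 0 * (Xᵀ * X) 1 1 + (Xᵀ * X) 0 0 * Dd X E 1 1
          - (Dd X E 0 1 * (Xᵀ * X) 1 0 + (Xᵀ * X) 0 1 * Dd X E 1 0))) 0 := by
  have key := hasDerivAt_entry X E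
  have h2 := ((key 0 0).add (key 1 1)).const_add (1 : ℝ)
  have h3 := ((key 0 0).mul (key 1 1)).sub ((key 0 1).mul (key 1 0))
  have h := h2.add h3
  have hval : (0 : ℝ) + (Dd X E 0 0 + Dd X E 1 1) +
      (Dd X E 0 0 * ((X + (0:ℝ) • E)ᵀ * (X + (0:ℝ) • E)) 1 1
        + ((X + (0:ℝ) • E)ᵀ * (X + (0:ℝ) • E)) 0 0 * Dd X E 1 1
        - (Dd X E 0 1 * ((X + (0:ℝ) • E)ᵀ * (X + (0:ℝ) • E)) 1 0
          + ((X + (0:ℝ) • E)ᵀ * (X + (0:ℝ) • E)) 0 1 * Dd X E 1 0)) =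
      Dd X E 0 0 + Dd X E 1 1 +
      (Dd X E 0 0 * (Xᵀ * X) 1 1 + (Xᵀ * X) 0 0 * Dd X E 1 1
        - (Dd X E 0 1 * (Xᵀ * X) 1 0 + (Xᵀ * X) 0 1 * Dd X E 1 0)) := by
    rw [entry_at_zero, entry_at_zero, entry_at_zero, entry_at_zero]; ring
  rw [← hval]
  apply (HasDerivAt.congr_of_eventuallyEq · (by filter_upwards with t; exact areaSq_expand _))
  convert h using 1
  · funext t; simp only [Pi.add_apply, Pi.sub_apply, Pi.mul_apply]
  · ring

lemma Dd_std {n : ℕ} (X : Matrix (Fin n) (Fin 2) ℝ) (i : Fin n) (j a b : Fin 2) :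
    Dd X (Matrix.single i j 1) a b
      = (if a = j then X i b else 0) + (if b = j then X i a else 0) := by
  unfold Dd
  rw [Finset.sum_add_distrib]
  congr 1
  · simp [Matrix.single, Matrix.of_apply, ite_and, eq_comm (a := a),
      Finset.sum_ite_eq, ite_mul, mul_ite]
  · simp [Matrix.single, Matrix.of_apply, ite_and, eq_comm (a := b),
      Finset.sum_ite_eq, ite_mul, mul_ite]

lemma Dd_total_eq {n : ℕ} (X : Matrix (Fin n) (Fin 2) ℝ) (i : Fin n) (j : Fin 2) :
    Dd X (Matrix.single i j 1) 0 0 + Dd X (Matrix.single i j 1) 1 1 +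
      (Dd X (Matrix.single i j 1) 0 0 * (Xᵀ * X) 1 1
        + (Xᵀ * X) 0 0 * Dd X (Matrix.single i j 1) 1 1
        - (Dd X (Matrix.single i j 1) 0 1 * (Xᵀ * X) 1 0
          + (Xᵀ * X) 0 1 * Dd X (Matrix.single i j 1) 1 0))
      = 2 * (X * Pmat X) i j := by
  have hP : ∀ l : Fin 2, Pmat X l j = (if l = j then 1 + frobInner X X else 0) - (Xᵀ * X) l j := by
    intro l
    simp [Pmat, Matrix.sub_apply, Matrix.smul_apply, Matrix.one_apply, smul_eq_mul, mul_ite]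
  have hmul : (X * Pmat X) i j = X i 0 * Pmat X 0 j + X i 1 * Pmat X 1 j := by
    simp [Matrix.mul_apply, Fin.sum_univ_two]
  have hsym := S_symm X 0 1
  have htr := frobInner_eq_trace X
  rw [Dd_std, Dd_std, Dd_std, Dd_std, hmul, hP 0, hP 1]
  fin_cases j <;> simp <;> rw [htr] <;> rw [hsym] <;> ring

lemma grad_Area_eq {n : ℕ} (X : Matrix (Fin n) (Fin 2) ℝ) :
    grad Area X = (Area X)⁻¹ • (X * Pmat X) := by
  funext i j
  have e0 : X + (0 : ℝ) • Matrix.single i j 1 = X := by simp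
  have hg := hasDerivAt_areaSq X (Matrix.single i j 1)
  have hs : HasDerivAt Real.sqrt
      (1 / (2 * Real.sqrt (areaSq (X + (0:ℝ) • Matrix.single i j 1))))
      ((fun t : ℝ => areaSq (X + t • Matrix.single i j 1)) 0) := by
    apply Real.hasDerivAt_sqrt
    show areaSq (X + (0:ℝ) • Matrix.single i j 1) ≠ 0
    rw [e0]; exact (areaSq_pos X).ne'
  have hcomp := HasDerivAt.comp (0 : ℝ) hs hg
  show deriv (fun t : ℝ => Area (X + t • Matrix.single i j 1)) 0 = _
  have hfun : (fun t : ℝ => Area (X + t • Matrix.single i j 1))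
      = Real.sqrt ∘ (fun t : ℝ => areaSq (X + t • Matrix.single i j 1)) := rfl
  rw [hfun, hcomp.deriv, e0, Dd_total_eq]
  have hA : Real.sqrt (areaSq X) = Area X := (Area_eq X).symm
  rw [hA]
  have := (Area_pos X).ne'
  simp only [Matrix.smul_apply, smul_eq_mul]
  field_simp

-- ### matB formula


lemma CH2 (S : Matrix (Fin 2) (Fin 2) ℝ) :
    S * ((S 0 0 + S 1 1) • (1 : Matrix (Fin 2) (Fin 2) ℝ) - S) = S.det • 1 := by
  ext a b
  fin_cases a <;> fin_cases b <;>
    simp [Matrix.mul_apply, Matrix.sub_apply, Matrix.smul_apply, Matrix.one_apply,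
      Fin.sum_univ_two, Matrix.det_fin_two, smul_eq_mul] <;> ring

lemma SP_eq {n : ℕ} (X : Matrix (Fin n) (Fin 2) ℝ) :
    Xᵀ * X * Pmat X = Xᵀ * X + (Xᵀ * X).det • 1 := by
  have h := CH2 (Xᵀ * X)
  have hP : Pmat X = 1 + (((Xᵀ*X) 0 0 + (Xᵀ*X) 1 1) • (1 : Matrix (Fin 2) (Fin 2) ℝ) - Xᵀ*X) := by
    rw [Pmat, frobInner_eq_trace, add_smul, one_smul]
    abel
  rw [hP, Matrix.mul_add, Matrix.mul_one, h]

def Gmat {n : ℕ} (X : Matrix (Fin n) (Fin 2) ℝ) : Matrix (Fin 2) (Fin 2) ℝ :=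
  (Area X)⁻¹ • Pmat X

lemma PJ_identity {n : ℕ} (X : Matrix (Fin n) (Fin 2) ℝ) :
    (Xᵀ * X + (Xᵀ * X).det • 1) * symJ - areaSq X • symJ = -(Pmat X * symJ) := by
  have htr := frobInner_eq_trace X
  have hdet := areaSq_expand X
  funext a b
  fin_cases a <;> fin_cases b <;>
    · simp [Pmat, symJ, Matrix.mul_apply, Matrix.sub_apply, Matrix.add_apply,
        Matrix.smul_apply, Matrix.one_apply, Matrix.neg_apply, Fin.sum_univ_two,
        Matrix.det_fin_two, smul_eq_mul, htr, hdet]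
      try ring


lemma matB_eq {n : ℕ} (X : Matrix (Fin n) (Fin 2) ℝ) :
    matB X = -(Gmat X * symJ) := by
  have ha := (Area_pos X).ne'
  have hAsq := Area_sq X
  have hsm : Area X • symJ = (Area X)⁻¹ • (areaSq X • symJ) := by
    rw [smul_smul, ← hAsq]
    congr 1
    field_simp
  rw [matB, grad_Area_eq, Matrix.mul_smul, Matrix.smul_mul, ← Matrix.mul_assoc, SP_eq, hsm,
    ← smul_sub, PJ_identity, Gmat, Matrix.smul_mul, smul_neg]

-- ### scalar quadratic lemma

lemma scalar_quad (k p q r x y : ℝ) (hk : 0 < k) (hp : 0 < p) (hr : 0 < r)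
    (hdet : p * r - q ^ 2 = 1) (hnorm : p ^ 2 + 2 * q ^ 2 + r ^ 2 ≤ k ^ 2) :
    p * x ^ 2 + 2 * q * x * y + r * y ^ 2 ≥ (1 / k) * (x ^ 2 + y ^ 2) := by
  have hpk : p ≤ k := by nlinarith
  have hrk : r ≤ k := by nlinarith
  have hpd : 1 / k ≤ p := by rw [div_le_iff₀ hk]; nlinarith
  have hrd : 1 / k ≤ r := by rw [div_le_iff₀ hk]; nlinarith
  have hsum : p + r ≤ k + 1 / k := by
    have h2 : (p + r) ^ 2 ≤ k ^ 2 + 2 := by nlinarith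
    have h3 : (k + 1 / k) ^ 2 = k ^ 2 + 2 + (1 / k) ^ 2 := by field_simp; ring
    nlinarith [sq_nonneg (1 / k), add_pos hp hr, add_pos hk (div_pos one_pos hk)]
  have hdd : (p - 1 / k) * (r - 1 / k) ≥ q ^ 2 := by
    have e1 : (p - 1 / k) * (r - 1 / k) - q ^ 2 = 1 - (p + r) * (1 / k) + (1 / k) ^ 2 := by
      rw [← hdet]; ring
    have e2 : 1 - (p + r) * (1 / k) + (1 / k) ^ 2 ≥ 1 - (k + 1 / k) * (1 / k) + (1 / k) ^ 2 := by
      have := div_pos one_pos hk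
      nlinarith
    have e3 : 1 - (k + 1 / k) * (1 / k) + (1 / k) ^ 2 = 0 := by field_simp; ring
    linarith [e1, e2, e3]
  have hA : 0 ≤ p - 1 / k := by linarith
  have hC : 0 ≤ r - 1 / k := by linarith
  rcases eq_or_lt_of_le hA with hA0 | hApos
  · have hq : q = 0 := by nlinarith [sq_nonneg q]
    rw [hq]
    nlinarith [sq_nonneg x, sq_nonneg y]
  · have h5 : ((p - 1 / k) * (r - 1 / k) - q ^ 2) * y ^ 2 ≥ 0 :=
      mul_nonneg (by linarith) (sq_nonneg y)
    nlinarith [sq_nonneg ((p - 1 / k) * x + q * y), h5, hApos]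

-- ### Gmat facts

lemma Gmat_apply {n : ℕ} (X : Matrix (Fin n) (Fin 2) ℝ) (a b : Fin 2) :
    Gmat X a b = (Area X)⁻¹ * ((if a = b then 1 + frobInner X X else 0) - (Xᵀ * X) a b) := by
  simp [Gmat, Pmat, Matrix.smul_apply, Matrix.sub_apply, Matrix.one_apply, smul_eq_mul, mul_ite]

lemma Gmat_symm {n : ℕ} (X : Matrix (Fin n) (Fin 2) ℝ) : Gmat X 1 0 = Gmat X 0 1 := by
  rw [Gmat_apply, Gmat_apply, S_symm X 1 0]
  norm_num

lemma Gmat_00_pos {n : ℕ} (X : Matrix (Fin n) (Fin 2) ℝ) : 0 < Gmat X 0 0 := by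
  rw [Gmat_apply, frobInner_eq_trace]
  have h1 := S_diag_nonneg X 1
  have := Area_pos X
  have h2 : (0:ℝ) < 1 + ((Xᵀ * X) 0 0 + (Xᵀ * X) 1 1) - (Xᵀ * X) 0 0 := by linarith
  simp only [if_pos rfl]
  exact mul_pos (inv_pos.2 this) h2

lemma Gmat_11_pos {n : ℕ} (X : Matrix (Fin n) (Fin 2) ℝ) : 0 < Gmat X 1 1 := by
  rw [Gmat_apply, frobInner_eq_trace]
  have h1 := S_diag_nonneg X 0
  have := Area_pos X
  have h2 : (0:ℝ) < 1 + ((Xᵀ * X) 0 0 + (Xᵀ * X) 1 1) - (Xᵀ * X) 1 1 := by linarith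
  simp only [if_pos rfl]
  exact mul_pos (inv_pos.2 this) h2

lemma Gmat_det {n : ℕ} (X : Matrix (Fin n) (Fin 2) ℝ) :
    Gmat X 0 0 * Gmat X 1 1 - Gmat X 0 1 ^ 2 = 1 := by
  rw [Gmat_apply, Gmat_apply, Gmat_apply, frobInner_eq_trace]
  have ha := (Area_pos X).ne'
  have hAsq := Area_sq X
  have hexp := areaSq_expand X
  have hsym := S_symm X 0 1
  simp only [if_pos rfl, if_neg (by decide : ¬ ((0:Fin 2) = 1))]
  field_simp
  rw [hexp] at hAsq
  simp only [if_true]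
  linear_combination (-1) * hAsq - (Xᵀ * X) 0 1 * hsym

-- ### norm identities

lemma frobInner_mulJ (M : Matrix (Fin 2) (Fin 2) ℝ) :
    frobInner (M * symJ) (M * symJ) = frobInner M M := by
  simp [frobInner, symJ, Matrix.mul_apply, Fin.sum_univ_two]
  ring

lemma frobNorm_mulJ (M : Matrix (Fin 2) (Fin 2) ℝ) : frobNorm (M * symJ) = frobNorm M := by
  rw [frobNorm, frobInner_mulJ]; rfl

lemma frobNorm_matB {n : ℕ} (X : Matrix (Fin n) (Fin 2) ℝ) :
    frobNorm (matB X) = frobNorm (Gmat X) := by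
  rw [matB_eq, frobNorm_neg, frobNorm_mulJ]

lemma frobNorm_matB_sub {n : ℕ} (X Y : Matrix (Fin n) (Fin 2) ℝ) :
    frobNorm (matB X - matB Y) = frobNorm (Gmat X - Gmat Y) := by
  have h : matB X - matB Y = -((Gmat X - Gmat Y) * symJ) := by
    rw [matB_eq, matB_eq, Matrix.sub_mul]
    abel
  rw [h, frobNorm_neg, frobNorm_mulJ]

lemma Gmat_norm_sq {n : ℕ} (X : Matrix (Fin n) (Fin 2) ℝ) :
    frobInner (Gmat X) (Gmat X)
      = Gmat X 0 0 ^ 2 + 2 * Gmat X 0 1 ^ 2 + Gmat X 1 1 ^ 2 := by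
  rw [frobInner, Fin.sum_univ_two, Fin.sum_univ_two, Fin.sum_univ_two, Gmat_symm]
  ring

-- ### quadratic form bound

lemma quad_form {n : ℕ} {k : ℝ} (hk : 0 < k) (X : Matrix (Fin n) (Fin 2) ℝ)
    (hX : frobNorm (matB X) ≤ k) (d : Matrix (Fin n) (Fin 2) ℝ) :
    frobInner (d * Gmat X) d ≥ (1 / k) * frobInner d d := by
  have hnorm : Gmat X 0 0 ^ 2 + 2 * Gmat X 0 1 ^ 2 + Gmat X 1 1 ^ 2 ≤ k ^ 2 := by
    rw [← Gmat_norm_sq, ← frobNorm_sq (Gmat X)]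
    rw [frobNorm_matB] at hX
    nlinarith [frobNorm_nonneg (Gmat X)]
  have e1 : frobInner (d * Gmat X) d
      = ∑ i, (Gmat X 0 0 * d i 0 ^ 2 + 2 * Gmat X 0 1 * (d i 0) * (d i 1)
          + Gmat X 1 1 * d i 1 ^ 2) := by
    rw [frobInner]
    apply Finset.sum_congr rfl
    intro i _
    rw [Fin.sum_univ_two, Matrix.mul_apply, Matrix.mul_apply, Fin.sum_univ_two,
      Fin.sum_univ_two, Gmat_symm]
    ring
  have e2 : (1 / k) * frobInner d d = ∑ i, (1 / k) * (d i 0 ^ 2 + d i 1 ^ 2) := by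
    rw [frobInner, Finset.mul_sum]
    apply Finset.sum_congr rfl
    intro i _
    rw [Fin.sum_univ_two]
    ring
  rw [e1, e2]
  apply Finset.sum_le_sum
  intro i _
  exact scalar_quad k (Gmat X 0 0) (Gmat X 0 1) (Gmat X 1 1) (d i 0) (d i 1) hk
    (Gmat_00_pos X) (Gmat_11_pos X) (Gmat_det X) hnorm

lemma grad_eq_mul_Gmat {n : ℕ} (X : Matrix (Fin n) (Fin 2) ℝ) :
    grad Area X = X * Gmat X := by
  rw [grad_Area_eq, Gmat, Matrix.mul_smul]

-- ### core estimate

lemma core {n : ℕ} {k : ℝ} (hk : 0 < k) (X Y : Matrix (Fin n) (Fin 2) ℝ)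
    (hX : frobNorm (matB X) ≤ k) :
    frobInner (grad Area X - grad Area Y) (X - Y)
      + frobNorm (matB X - matB Y) * frobNorm Y * frobNorm (X - Y)
      ≥ (1 / k) * frobNorm (X - Y) ^ 2 := by
  have hdecomp : grad Area X - grad Area Y
      = (X - Y) * Gmat X + Y * (Gmat X - Gmat Y) := by
    rw [grad_eq_mul_Gmat, grad_eq_mul_Gmat, Matrix.sub_mul, Matrix.mul_sub]
    abel
  rw [hdecomp, frobInner_add_left, frobNorm_matB_sub, frobNorm_sq]
  have h1 := quad_form hk X hX (X - Y)
  have h2 : frobInner (Y * (Gmat X - Gmat Y)) (X - Y)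
      ≥ -(frobNorm Y * frobNorm (Gmat X - Gmat Y) * frobNorm (X - Y)) := by
    have hcs := neg_frobNorm_mul_le (Y * (Gmat X - Gmat Y)) (X - Y)
    have hsub : frobNorm (Y * (Gmat X - Gmat Y)) ≤ frobNorm Y * frobNorm (Gmat X - Gmat Y) :=
      frobNorm_mul_le _ _
    have := mul_le_mul_of_nonneg_right hsub (frobNorm_nonneg (X - Y))
    linarith
  have e : frobNorm (Gmat X - Gmat Y) * frobNorm Y * frobNorm (X - Y)
      = frobNorm Y * frobNorm (Gmat X - Gmat Y) * frobNorm (X - Y) := by ring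
  rw [e]
  linarith

-- ### the main theorem

lemma symJ_mul_symJ : symJ * symJ = -1 := by
  ext a b
  fin_cases a <;> fin_cases b <;>
    simp [symJ, Matrix.mul_apply, Fin.sum_univ_two, Matrix.one_apply]

lemma frobInner_neg_left {m k : ℕ} (X Y : Matrix (Fin m) (Fin k) ℝ) :
    frobInner (-X) Y = -frobInner X Y := by
  simp [frobInner]

/-- For every `k > 0` there exist `C = C(k) > 0` and `δ = δ(k) > 0` such that for every
`X, Y ∈ ℝ^{n×2}` with `max{‖B(X)‖, ‖B(Y)‖} ≤ k` one has
`−⟨(A(X) − A(Y))J, X − Y⟩ + C·‖B(X) − B(Y)‖·min{‖X‖,‖Y‖}·‖X − Y‖ ≥ δ·‖X − Y‖²`. -/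
theorem main_subdeterminant_bound {n : ℕ} (hn : 1 ≤ n) (k : ℝ) (hk : 0 < k) :
    ∃ C δ : ℝ, 0 < C ∧ 0 < δ ∧ ∀ X Y : Matrix (Fin n) (Fin 2) ℝ,
      max (frobNorm (matB X)) (frobNorm (matB Y)) ≤ k →
      -frobInner ((matA X - matA Y) * symJ) (X - Y) +
          C * frobNorm (matB X - matB Y) * min (frobNorm X) (frobNorm Y) * frobNorm (X - Y) ≥
        δ * frobNorm (X - Y) ^ 2 := by
  refine ⟨1, 1 / k, one_pos, div_pos one_pos hk, ?_⟩
  intro X Y hmax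
  have hX : frobNorm (matB X) ≤ k := le_trans (le_max_left _ _) hmax
  have hY : frobNorm (matB Y) ≤ k := le_trans (le_max_right _ _) hmax
  have hAJ : (matA X - matA Y) * symJ = -(grad Area X - grad Area Y) := by
    rw [Matrix.sub_mul, matA, matA, Matrix.mul_assoc, Matrix.mul_assoc, symJ_mul_symJ,
      Matrix.mul_neg, Matrix.mul_one, Matrix.mul_neg, Matrix.mul_one]
    abel
  rw [hAJ, frobInner_neg_left, neg_neg, one_mul]
  rcases le_total (frobNorm X) (frobNorm Y) with h | h
  · rw [min_eq_left h]
    have hcore := core hk Y X hY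
    have e1 : grad Area Y - grad Area X = -(grad Area X - grad Area Y) := by abel
    have e2 : Y - X = -(X - Y) := by abel
    rw [e1, e2, frobInner_neg_neg, frobNorm_neg] at hcore
    have e3 : matB Y - matB X = -(matB X - matB Y) := by abel
    rw [e3, frobNorm_neg] at hcore
    linarith
  · rw [min_eq_right h]
    have hcore := core hk X Y hX
    linarith

end
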